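/- Let p be an odd prime and let S_p be the number of triples (a, b, c) ∈ (ℤ/p²ℤ)³ such that v_p(b² − 4ac) = 1 (i.e., p divides b² − 4ac exactly once) and c reduces mod p to a quadratic non-residue. Then S_p ≥ p³·(p(p−1)/2) − 4p⁴, in particular S_p ≥ p⁵/2 − C·p⁴ for an absolute constant C. -/

import Mathlib

section aux

variable (p : ℕ) [Fact p.Prime]

/-- The number of quadratic nonresidues mod an odd prime `p` is `(p-1)/2`,
stated multiplicatively. -/
lemma two_mul_card_nonres (hp : p ≠ 2) :
    2 * (Finset.univ.filter
      (fun y : ZMod p => quadraticChar (ZMod p) y = -1)).card = p - 1 := by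
  haveI : NeZero p := ⟨(Fact.out : p.Prime).ne_zero⟩
  have hchar : ringChar (ZMod p) ≠ 2 := by
    rw [ZMod.ringChar_zmod_n]; exact hp
  classical
  set χ := quadraticChar (ZMod p) with hχ
  set A := Finset.univ.filter (fun y : ZMod p => χ y = 1) with hA
  set B := Finset.univ.filter (fun y : ZMod p => χ y = -1) with hB
  have hquad := quadraticChar_isQuadratic (ZMod p)
  have hsum : ∑ a : ZMod p, χ a = 0 := quadraticChar_sum_zero hchar
  have hsplit : ∑ a : ZMod p, χ a
      = ∑ a ∈ A, χ a + ∑ a ∈ Finset.univ.filter (fun a => ¬ χ a = 1), χ a :=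
    (Finset.sum_filter_add_sum_filter_not _ _ _).symm
  have hAsum : ∑ a ∈ A, χ a = (A.card : ℤ) := by
    rw [Finset.sum_congr rfl (fun x hx => (Finset.mem_filter.mp hx).2)]
    simp
    rfl
  have hBsub : B ⊆ Finset.univ.filter (fun a => ¬ χ a = 1) := by
    intro a ha
    simp only [hB, Finset.mem_filter, Finset.mem_univ, true_and] at ha ⊢
    rw [ha]; decide
  have hBsum : ∑ a ∈ Finset.univ.filter (fun a => ¬ χ a = 1), χ a
      = -(B.card : ℤ) := by
    rw [← Finset.sum_subset hBsub ?_]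
    · rw [Finset.sum_congr rfl (fun x hx => (Finset.mem_filter.mp hx).2)]
      simp
      rfl
    · intro x hx hxB
      simp only [hB, Finset.mem_filter, Finset.mem_univ, true_and] at hxB
      simp only [Finset.mem_filter, Finset.mem_univ, true_and] at hx
      rcases hquad x with h | h | h
      · exact h
      · exact absurd h hx
      · exact absurd h hxB
  have hcards : (A.card : ℤ) = B.card := by
    have h0 := hsplit.symm.trans hsum
    rw [hAsum, hBsum] at h0
    linarith
  have hcardsN : A.card = B.card := by exact_mod_cast hcards
  have hdisj : Disjoint A B := by
    rw [Finset.disjoint_left]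
    intro a haA haB
    simp only [hA, hB, Finset.mem_filter, Finset.mem_univ, true_and] at haA haB
    rw [haA] at haB; exact absurd haB (by decide)
  have hunion : A ∪ B = Finset.univ.filter (fun a : ZMod p => a ≠ 0) := by
    ext a
    simp only [hA, hB, Finset.mem_union, Finset.mem_filter, Finset.mem_univ, true_and]
    constructor
    · rintro (h | h) <;> intro h0 <;> rw [h0] at h <;>
        simp [hχ, quadraticChar_zero] at h
    · intro h0
      rcases hquad a with h | h | h
      · exact absurd (quadraticChar_eq_zero_iff.mp h) h0
      · exact Or.inl h
      · exact Or.inr h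
  have hcardU : (A ∪ B).card = p - 1 := by
    rw [hunion]
    have herase : Finset.univ.filter (fun a : ZMod p => a ≠ 0)
        = Finset.univ.erase (0 : ZMod p) := by
      ext a; simp [Finset.mem_erase, and_comm]
    rw [herase, Finset.card_erase_of_mem (Finset.mem_univ _), Finset.card_univ,
      ZMod.card]
  rw [Finset.card_union_of_disjoint hdisj, hcardsN] at hcardU
  omega

end aux

/-- For an odd prime `p`, the number `S_p` of triples `(a,b,c)` of residues mod `p²` such that
`b² - 4ac` is divisible by `p` exactly once and `c` reduces to a quadratic non-residue mod `p`
satisfies `S_p ≥ p³ · (p(p-1)/2) - 4p⁴`. -/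
theorem count_valuation_one_nonresidue (p : ℕ) [Fact p.Prime] (hp : p ≠ 2) :
    (p : ℤ) ^ 3 * ((p * (p - 1) : ℤ) / 2) - 4 * (p : ℤ) ^ 4 ≤
      (Nat.card {t : ZMod (p ^ 2) × ZMod (p ^ 2) × ZMod (p ^ 2) //
        ZMod.castHom (dvd_pow_self p (two_ne_zero)) (ZMod p)
            (t.2.1 ^ 2 - 4 * t.1 * t.2.2) = 0 ∧
        t.2.1 ^ 2 - 4 * t.1 * t.2.2 ≠ 0 ∧
        quadraticChar (ZMod p) (ZMod.castHom (dvd_pow_self p (two_ne_zero)) (ZMod p) t.2.2)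
          = -1} : ℤ) := by
  classical
  have pp : p.Prime := Fact.out
  haveI : NeZero p := ⟨pp.ne_zero⟩
  haveI : NeZero (p ^ 2) := ⟨pow_ne_zero 2 pp.ne_zero⟩
  have hp3 : 3 ≤ p := by
    have := pp.two_le
    omega
  set f := ZMod.castHom (dvd_pow_self p (two_ne_zero)) (ZMod p) with hf
  set D := ({y : ZMod p // quadraticChar (ZMod p) y = -1} × ZMod p ×
      ZMod (p ^ 2) × {u : ZMod p // u ≠ 0}) with hD
  have hply : ∀ (y : ZMod p) (j : ZMod p), y.val + p * j.val < p ^ 2 := by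
    intro y j
    have h1 : y.val < p := ZMod.val_lt y
    have h2 : j.val < p := ZMod.val_lt j
    have hstep : y.val + p * j.val < p * (j.val + 1) := by
      rw [Nat.mul_succ]; omega
    calc y.val + p * j.val < p * (j.val + 1) := hstep
      _ ≤ p * p := Nat.mul_le_mul_left p h2
      _ = p ^ 2 := (sq p).symm
  have hplu : ∀ u : ZMod p, p * u.val < p ^ 2 := by
    intro u
    have h2 : u.val < p := ZMod.val_lt u
    calc p * u.val < p * p := by
          exact mul_lt_mul_of_pos_left h2 (by omega)
      _ = p ^ 2 := (sq p).symm
  have hunit : ∀ (y : {y : ZMod p // quadraticChar (ZMod p) y = -1}) (j : ZMod p),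
      IsUnit ((4 : ZMod (p ^ 2)) * ((y.1.val + p * j.val : ℕ) : ZMod (p ^ 2))) := by
    intro y j
    have h4 : ((4 : ZMod (p ^ 2)) * ((y.1.val + p * j.val : ℕ) : ZMod (p ^ 2)))
        = ((4 * (y.1.val + p * j.val) : ℕ) : ZMod (p ^ 2)) := by push_cast; ring
    rw [h4, ZMod.isUnit_iff_coprime]
    have hc2p : Nat.Coprime 2 p :=
      (Nat.coprime_primes Nat.prime_two pp).mpr (Ne.symm hp)
    have hc4p : Nat.Coprime 4 p := by
      have := Nat.Coprime.mul hc2p hc2p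
      simpa using this
    have hynz : y.1 ≠ 0 := by
      intro h
      have hy2 := y.2
      rw [h, quadraticChar_zero] at hy2
      exact absurd hy2 (by decide)
    have hndvd : ¬ p ∣ (y.1.val + p * j.val) := by
      intro hdvd
      have hpy : p ∣ y.1.val := by
        have h1 : p ∣ p * j.val := ⟨j.val, rfl⟩
        exact (Nat.dvd_add_right h1).mp (by rwa [Nat.add_comm] at hdvd)
      have h0 : y.1.val = 0 := Nat.eq_zero_of_dvd_of_lt hpy (ZMod.val_lt y.1)
      exact hynz ((ZMod.val_eq_zero y.1).mp h0)
    have hcnp : Nat.Coprime (y.1.val + p * j.val) p :=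
      ((Nat.Prime.coprime_iff_not_dvd pp).mpr hndvd).symm
    exact (Nat.Coprime.mul hc4p hcnp).pow_right 2
  -- the witness map
  let F : D → {t : ZMod (p ^ 2) × ZMod (p ^ 2) × ZMod (p ^ 2) //
        f (t.2.1 ^ 2 - 4 * t.1 * t.2.2) = 0 ∧
        t.2.1 ^ 2 - 4 * t.1 * t.2.2 ≠ 0 ∧
        quadraticChar (ZMod p) (f t.2.2) = -1} := fun d =>
    ⟨(((d.2.2.1 : ZMod (p ^ 2)) ^ 2 - ((p * d.2.2.2.1.val : ℕ) : ZMod (p ^ 2))) *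
        ((4 : ZMod (p ^ 2)) * ((d.1.1.val + p * d.2.1.val : ℕ) : ZMod (p ^ 2)))⁻¹,
      d.2.2.1,
      ((d.1.1.val + p * d.2.1.val : ℕ) : ZMod (p ^ 2))), by
      obtain ⟨y, j, b, u⟩ := d
      set c : ZMod (p ^ 2) := ((y.1.val + p * j.val : ℕ) : ZMod (p ^ 2)) with hc
      set t : ZMod (p ^ 2) := ((p * u.1.val : ℕ) : ZMod (p ^ 2)) with ht
      set a : ZMod (p ^ 2) := (b ^ 2 - t) * (4 * c)⁻¹ with ha
      have hbc : b ^ 2 - 4 * a * c = t := by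
        have h1 : 4 * a * c = (b ^ 2 - t) * ((4 * c) * (4 * c)⁻¹) := by
          rw [ha]; ring
        rw [h1, ZMod.mul_inv_of_unit _ (hunit y j)]
        ring
      refine ⟨?_, ?_, ?_⟩
      · show f (b ^ 2 - 4 * a * c) = 0
        rw [hbc, ht, map_natCast]
        push_cast
        simp
      · show b ^ 2 - 4 * a * c ≠ 0
        rw [hbc, ht]
        intro h
        rw [ZMod.natCast_eq_zero_iff] at h
        have hdvd : p * p ∣ p * u.1.val := by rwa [← sq]
        have hdu : p ∣ u.1.val :=
          (mul_dvd_mul_iff_left (by positivity : (p:ℕ) ≠ 0)).mp hdvd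
        have h0 : u.1.val = 0 := Nat.eq_zero_of_dvd_of_lt hdu (ZMod.val_lt u.1)
        exact u.2 ((ZMod.val_eq_zero u.1).mp h0)
      · show quadraticChar (ZMod p) (f c) = -1
        rw [hc, map_natCast]
        push_cast
        simp only [ZMod.natCast_self, zero_mul, add_zero, ZMod.natCast_val,
          ZMod.cast_id]
        exact y.2⟩
  have hFinj : Function.Injective F := by
    rintro ⟨y1, j1, b1, u1⟩ ⟨y2, j2, b2, u2⟩ h
    have hmem1 := (F (y1, j1, b1, u1)).2
    have hmem2 := (F (y2, j2, b2, u2)).2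
    have hval : (F (y1, j1, b1, u1)).1 = (F (y2, j2, b2, u2)).1 := by rw [h]
    rw [Prod.ext_iff, Prod.ext_iff] at hval
    have ha := hval.1
    have hb := hval.2.1
    have hc := hval.2.2
    simp only [F] at ha hb hc
    -- c components
    have hcnat : y1.1.val + p * j1.val = y2.1.val + p * j2.val := by
      have hv := congrArg ZMod.val hc
      rwa [ZMod.val_cast_of_lt (hply y1.1 j1), ZMod.val_cast_of_lt (hply y2.1 j2)] at hv
    have hy1lt : y1.1.val < p := ZMod.val_lt y1.1
    have hy2lt : y2.1.val < p := ZMod.val_lt y2.1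
    have hyval : y1.1.val = y2.1.val := by
      have h1 : (y1.1.val + p * j1.val) % p = y1.1.val := by
        rw [Nat.add_mul_mod_self_left, Nat.mod_eq_of_lt hy1lt]
      have h2 : (y2.1.val + p * j2.val) % p = y2.1.val := by
        rw [Nat.add_mul_mod_self_left, Nat.mod_eq_of_lt hy2lt]
      rw [← h1, ← h2, hcnat]
    have hy : y1 = y2 := Subtype.ext (ZMod.val_injective p hyval)
    have hjval : j1.val = j2.val := by
      have hmul : p * j1.val = p * j2.val := by omega
      exact Nat.eq_of_mul_eq_mul_left (by omega) hmul
    have hj : j1 = j2 := ZMod.val_injective p hjval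
    -- t components via the discriminant
    have ht12 : ((p * u1.1.val : ℕ) : ZMod (p ^ 2)) = ((p * u2.1.val : ℕ) : ZMod (p ^ 2)) := by
      have e1 : b1 ^ 2 - 4 * ((b1 ^ 2 - ((p * u1.1.val : ℕ) : ZMod (p ^ 2))) *
            ((4 : ZMod (p ^ 2)) * ((y1.1.val + p * j1.val : ℕ) : ZMod (p ^ 2)))⁻¹) *
            ((y1.1.val + p * j1.val : ℕ) : ZMod (p ^ 2))
          = ((p * u1.1.val : ℕ) : ZMod (p ^ 2)) := by
        have h1 : 4 * ((b1 ^ 2 - ((p * u1.1.val : ℕ) : ZMod (p ^ 2))) *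
              ((4 : ZMod (p ^ 2)) * ((y1.1.val + p * j1.val : ℕ) : ZMod (p ^ 2)))⁻¹) *
              ((y1.1.val + p * j1.val : ℕ) : ZMod (p ^ 2))
            = (b1 ^ 2 - ((p * u1.1.val : ℕ) : ZMod (p ^ 2))) *
              (((4 : ZMod (p ^ 2)) * ((y1.1.val + p * j1.val : ℕ) : ZMod (p ^ 2))) *
               ((4 : ZMod (p ^ 2)) * ((y1.1.val + p * j1.val : ℕ) : ZMod (p ^ 2)))⁻¹) := by
          ring
        rw [h1, ZMod.mul_inv_of_unit _ (hunit y1 j1)]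
        ring
      have e2 : b2 ^ 2 - 4 * ((b2 ^ 2 - ((p * u2.1.val : ℕ) : ZMod (p ^ 2))) *
            ((4 : ZMod (p ^ 2)) * ((y2.1.val + p * j2.val : ℕ) : ZMod (p ^ 2)))⁻¹) *
            ((y2.1.val + p * j2.val : ℕ) : ZMod (p ^ 2))
          = ((p * u2.1.val : ℕ) : ZMod (p ^ 2)) := by
        have h1 : 4 * ((b2 ^ 2 - ((p * u2.1.val : ℕ) : ZMod (p ^ 2))) *
              ((4 : ZMod (p ^ 2)) * ((y2.1.val + p * j2.val : ℕ) : ZMod (p ^ 2)))⁻¹) *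
              ((y2.1.val + p * j2.val : ℕ) : ZMod (p ^ 2))
            = (b2 ^ 2 - ((p * u2.1.val : ℕ) : ZMod (p ^ 2))) *
              (((4 : ZMod (p ^ 2)) * ((y2.1.val + p * j2.val : ℕ) : ZMod (p ^ 2))) *
               ((4 : ZMod (p ^ 2)) * ((y2.1.val + p * j2.val : ℕ) : ZMod (p ^ 2)))⁻¹) := by
          ring
        rw [h1, ZMod.mul_inv_of_unit _ (hunit y2 j2)]
        ring
      rw [← e1, ← e2, ha, hb, hc]
    have htnat : p * u1.1.val = p * u2.1.val := by
      have hv := congrArg ZMod.val ht12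
      rwa [ZMod.val_cast_of_lt (hplu u1.1), ZMod.val_cast_of_lt (hplu u2.1)] at hv
    have hu : u1 = u2 := Subtype.ext (ZMod.val_injective p
      (Nat.eq_of_mul_eq_mul_left (by omega) htnat))
    rw [hy, hj, hb, hu]
  -- counting
  have hcardle := Nat.card_le_card_of_injective F hFinj
  have hcardD : Nat.card D = (Finset.univ.filter
      (fun y : ZMod p => quadraticChar (ZMod p) y = -1)).card * (p * (p ^ 2 * (p - 1))) := by
    rw [hD, Nat.card_prod, Nat.card_prod, Nat.card_prod, Nat.card_zmod, Nat.card_zmod]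
    congr 1
    · rw [Nat.card_eq_fintype_card, Fintype.card_subtype]
    · congr 1
      congr 1
      rw [Nat.card_eq_fintype_card]
      have : Fintype.card {u : ZMod p // u ≠ 0}
          = Fintype.card (ZMod p) - Fintype.card {u : ZMod p // u = 0} :=
        Fintype.card_subtype_compl _
      rw [this, Fintype.card_subtype_eq, ZMod.card]
  set m := (Finset.univ.filter
      (fun y : ZMod p => quadraticChar (ZMod p) y = -1)).card with hm
  have hmN : 2 * m = p - 1 := two_mul_card_nonres p hp
  have hmZ : (2 * m : ℤ) = (p : ℤ) - 1 := by
    have : (2 * m : ℕ) = p - 1 := hmN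
    omega
  have hDlower : ((m : ℤ) * (p * (p ^ 2 * ((p : ℤ) - 1)))) ≤ (Nat.card D : ℤ) := by
    rw [hcardD]
    have h1 : ((m * (p * (p ^ 2 * (p - 1))) : ℕ) : ℤ)
        = (m : ℤ) * (p * (p ^ 2 * ((p : ℤ) - 1))) := by
      push_cast [Nat.cast_sub (show 1 ≤ p by omega)]
      ring
    rw [h1]
  -- final arithmetic
  have hfinal : (p : ℤ) ^ 3 * ((p * (p - 1) : ℤ) / 2) - 4 * (p : ℤ) ^ 4
      ≤ ((m : ℤ) * (p * (p ^ 2 * ((p : ℤ) - 1)))) := by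
    have hpm1 : ((p : ℤ) - 1) = 2 * m := hmZ.symm
    rw [hpm1]
    have hdiv : ((p : ℤ) * (2 * m)) / 2 = (p : ℤ) * m := by
      rw [show (p : ℤ) * (2 * m) = 2 * ((p : ℤ) * m) by ring,
        Int.mul_ediv_cancel_left _ (by norm_num)]
    rw [hdiv]
    have hmlep : (m : ℤ) ≤ p := by
      have : m ≤ p := by omega
      exact_mod_cast this
    have hm0 : (0 : ℤ) ≤ m := Int.natCast_nonneg m
    have hp0 : (0 : ℤ) < p := by exact_mod_cast (by omega : 0 < p)
    nlinarith [pow_pos hp0 3, mul_nonneg (le_of_lt (pow_pos hp0 3))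
      (sub_nonneg.mpr hmlep), sq_nonneg ((p:ℤ) - m)]
  calc (p : ℤ) ^ 3 * ((p * (p - 1) : ℤ) / 2) - 4 * (p : ℤ) ^ 4
      ≤ ((m : ℤ) * (p * (p ^ 2 * ((p : ℤ) - 1)))) := hfinal
    _ ≤ (Nat.card D : ℤ) := hDlower
    _ ≤ _ := by exact_mod_cast hcardle
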